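/- Let m ≥ 1 and let A₁, …, A_m be elements of 𝔄. Then gₙ({A_j}) converges in norm to exp(∑_{j=1}^m A_j) as n → ∞, i.e. lim_{n→∞} ( ((exp(A₁/n) ∘ exp(A₂/n)) ∘ ⋯ ) ∘ exp(A_m/n) )ⁿ = exp(∑_{j=1}^m A_j). -/

import Mathlib

open Filter NormedSpace Asymptotics

/-- The Jordan product `a ∘ b = (ab + ba)/2` on a normed algebra over `𝕜`. -/
noncomputable def jordanMul (𝕜 : Type*) [RCLike 𝕜] {𝔄 : Type*} [NormedRing 𝔄]
    [NormedAlgebra 𝕜 𝔄] (a b : 𝔄) : 𝔄 :=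
  (2 : 𝕜)⁻¹ • (a * b + b * a)

/-- `gProd 𝕜 A m n` is the left-nested Jordan product
`((exp(A₁/n) ∘ exp(A₂/n)) ∘ ⋯ ) ∘ exp(A_m/n)`, where the elements are `A 1, …, A m`. -/
noncomputable def gProd (𝕜 : Type*) [RCLike 𝕜] {𝔄 : Type*} [NormedRing 𝔄]
    [NormedAlgebra 𝕜 𝔄] (A : ℕ → 𝔄) (m n : ℕ) : 𝔄 :=
  (((List.range' 1 m).map fun j => exp ((n : 𝕜)⁻¹ • A j)).foldl (jordanMul 𝕜) 1)

section Aux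

variable {𝕜 : Type*} [RCLike 𝕜] {𝔄 : Type*} [NormedRing 𝔄] [NormedAlgebra 𝕜 𝔄]

/-- Multiplication on the left by `u` expands norms by a factor of at most `1 + ‖u - 1‖`. -/
lemma auxLT_mul_left_le (u x : 𝔄) : ‖u * x‖ ≤ (1 + ‖u - 1‖) * ‖x‖ := by
  have hid : u * x = x + (u - 1) * x := by noncomm_ring
  calc ‖u * x‖ = ‖x + (u - 1) * x‖ := by rw [hid]
    _ ≤ ‖x‖ + ‖(u - 1) * x‖ := norm_add_le _ _
    _ ≤ ‖x‖ + ‖u - 1‖ * ‖x‖ := by gcongr; exact norm_mul_le _ _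
    _ = (1 + ‖u - 1‖) * ‖x‖ := by ring

/-- Multiplication on the right by `v` expands norms by a factor of at most `1 + ‖v - 1‖`. -/
lemma auxLT_mul_right_le (v x : 𝔄) : ‖x * v‖ ≤ (1 + ‖v - 1‖) * ‖x‖ := by
  have hid : x * v = x + x * (v - 1) := by noncomm_ring
  calc ‖x * v‖ = ‖x + x * (v - 1)‖ := by rw [hid]
    _ ≤ ‖x‖ + ‖x * (v - 1)‖ := norm_add_le _ _
    _ ≤ ‖x‖ + ‖x‖ * ‖v - 1‖ := by gcongr; exact norm_mul_le _ _
    _ = (1 + ‖v - 1‖) * ‖x‖ := by ring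

lemma auxLT_pow_mul_left_le (u : 𝔄) {C : ℝ} (hu : 1 + ‖u - 1‖ ≤ C) :
    ∀ (k : ℕ) (x : 𝔄), ‖u ^ k * x‖ ≤ C ^ k * ‖x‖ := by
  have hC0 : (0:ℝ) ≤ C := le_trans (by positivity) hu
  intro k
  induction k with
  | zero => intro x; simp
  | succ k ih =>
    intro x
    have h1 : u ^ (k+1) * x = u * (u ^ k * x) := by rw [pow_succ']; rw [mul_assoc]
    calc ‖u ^ (k+1) * x‖ = ‖u * (u ^ k * x)‖ := by rw [h1]
      _ ≤ (1 + ‖u - 1‖) * ‖u ^ k * x‖ := auxLT_mul_left_le _ _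
      _ ≤ C * (C ^ k * ‖x‖) := by
          apply mul_le_mul hu (ih x) (norm_nonneg _) hC0
      _ = C ^ (k+1) * ‖x‖ := by ring

lemma auxLT_pow_mul_right_le (v : 𝔄) {C : ℝ} (hv : 1 + ‖v - 1‖ ≤ C) :
    ∀ (k : ℕ) (x : 𝔄), ‖x * v ^ k‖ ≤ C ^ k * ‖x‖ := by
  have hC0 : (0:ℝ) ≤ C := le_trans (by positivity) hv
  intro k
  induction k with
  | zero => intro x; simp
  | succ k ih =>
    intro x
    have h1 : x * v ^ (k+1) = (x * v ^ k) * v := by rw [pow_succ]; rw [mul_assoc]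
    calc ‖x * v ^ (k+1)‖ = ‖(x * v ^ k) * v‖ := by rw [h1]
      _ ≤ (1 + ‖v - 1‖) * ‖x * v ^ k‖ := auxLT_mul_right_le _ _
      _ ≤ C * (C ^ k * ‖x‖) := by
          apply mul_le_mul hv (ih x) (norm_nonneg _) hC0
      _ = C ^ (k+1) * ‖x‖ := by ring

/-- Telescoping estimate for differences of powers. -/
lemma auxLT_pow_sub_pow_le (u v : 𝔄) {C : ℝ} (h1 : 1 ≤ C)
    (hu : 1 + ‖u - 1‖ ≤ C) (hv : 1 + ‖v - 1‖ ≤ C) :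
    ∀ n : ℕ, ‖u ^ n - v ^ n‖ ≤ n * C ^ n * ‖u - v‖ := by
  have hC0 : (0:ℝ) ≤ C := le_trans zero_le_one h1
  have hul := auxLT_pow_mul_left_le u hu
  have hvr := auxLT_pow_mul_right_le v hv
  have key : ∀ k : ℕ, ‖u ^ (k+1) - v ^ (k+1)‖ ≤ (k+1) * C ^ k * ‖u - v‖ := by
    intro k
    induction k with
    | zero => simp
    | succ k ih =>
      have hid : u ^ (k+2) - v ^ (k+2)
          = u * (u ^ (k+1) - v ^ (k+1)) + (u - v) * v ^ (k+1) := by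
        have e1 : u ^ (k+2) = u * u ^ (k+1) := by rw [pow_succ']
        have e2 : v ^ (k+2) = v * v ^ (k+1) := by rw [pow_succ']
        rw [e1, e2, mul_sub, sub_mul]; abel
      have h2 : ‖u * (u ^ (k+1) - v ^ (k+1))‖ ≤ C * ((k+1) * C ^ k * ‖u - v‖) := by
        have := hul 1 (u ^ (k+1) - v ^ (k+1))
        rw [pow_one, pow_one] at this
        calc ‖u * (u ^ (k+1) - v ^ (k+1))‖ ≤ C * ‖u ^ (k+1) - v ^ (k+1)‖ := this
          _ ≤ C * ((k+1) * C ^ k * ‖u - v‖) := by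
              exact mul_le_mul_of_nonneg_left ih hC0
      have h3 : ‖(u - v) * v ^ (k+1)‖ ≤ C ^ (k+1) * ‖u - v‖ := hvr (k+1) (u - v)
      calc ‖u ^ (k+2) - v ^ (k+2)‖
          ≤ ‖u * (u ^ (k+1) - v ^ (k+1))‖ + ‖(u - v) * v ^ (k+1)‖ := by
            rw [hid]; exact norm_add_le _ _
        _ ≤ C * ((k+1) * C ^ k * ‖u - v‖) + C ^ (k+1) * ‖u - v‖ := add_le_add h2 h3
        _ = ((k:ℝ)+2) * C ^ (k+1) * ‖u - v‖ := by ring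
        _ = ((k+1 : ℕ) + 1 : ℝ) * C ^ (k+1) * ‖u - v‖ := by push_cast; ring
  intro n
  cases n with
  | zero => simp
  | succ k =>
    calc ‖u ^ (k+1) - v ^ (k+1)‖ ≤ (k+1) * C ^ k * ‖u - v‖ := key k
      _ ≤ (k+1) * C ^ (k+1) * ‖u - v‖ := by
          apply mul_le_mul_of_nonneg_right _ (norm_nonneg _)
          apply mul_le_mul_of_nonneg_left (pow_le_pow_right₀ h1 (Nat.le_succ k))
          positivity
      _ = ((k+1 : ℕ) : ℝ) * C ^ (k+1) * ‖u - v‖ := by push_cast; ring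

lemma auxLT_inv_tendsto : Tendsto (fun n : ℕ => ((n : 𝕜))⁻¹) atTop (nhds 0) := by
  rw [tendsto_zero_iff_norm_tendsto_zero]
  have h : (fun n : ℕ => ‖((n:𝕜))⁻¹‖) = fun n : ℕ => ((n:ℝ))⁻¹ := by
    funext n
    rw [norm_inv, RCLike.norm_natCast]
  rw [h]
  exact tendsto_inv_atTop_nhds_zero_nat

variable [CompleteSpace 𝔄]

/-- `n • (exp (S/n) - 1) → S`. -/
lemma auxLT_exp_base (S : 𝔄) :
    Tendsto (fun n : ℕ => (n : 𝕜) • (exp ((n : 𝕜)⁻¹ • S) - 1)) atTop (nhds S) := by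
  have hd : HasFDerivAt exp (1 : 𝔄 →L[𝕜] 𝔄) 0 := hasFDerivAt_exp_zero
  have ho : (fun h : 𝔄 => exp (0 + h) - exp 0 - (1 : 𝔄 →L[𝕜] 𝔄) h) =o[nhds 0]
      (fun h => h) := hasFDerivAt_iff_isLittleO_nhds_zero.mp hd
  have ho' : (fun h : 𝔄 => exp h - 1 - h) =o[nhds 0] (fun h => h) := by
    simpa [exp_zero] using ho
  have hx : Tendsto (fun n : ℕ => (n : 𝕜)⁻¹ • S) atTop (nhds (0 : 𝔄)) := by
    have h := (auxLT_inv_tendsto (𝕜 := 𝕜)).smul_const S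
    simpa using h
  have h1 : (fun n : ℕ => exp ((n : 𝕜)⁻¹ • S) - 1 - (n : 𝕜)⁻¹ • S) =o[atTop]
      (fun n : ℕ => (n : 𝕜)⁻¹ • S) := ho'.comp_tendsto hx
  have h2 : (fun n : ℕ => (n : 𝕜) • (exp ((n : 𝕜)⁻¹ • S) - 1 - (n : 𝕜)⁻¹ • S)) =o[atTop]
      (fun n : ℕ => (n : 𝕜) • ((n : 𝕜)⁻¹ • S)) :=
    (isBigO_refl (fun n : ℕ => (n : 𝕜)) atTop).smul_isLittleO h1
  have heq : ∀ᶠ n : ℕ in atTop, (n : 𝕜) • ((n : 𝕜)⁻¹ • S) = S := by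
    filter_upwards [eventually_ge_atTop 1] with n hn
    have hn0 : ((n : 𝕜)) ≠ 0 := Nat.cast_ne_zero.mpr (by omega)
    rw [smul_smul, mul_inv_cancel₀ hn0, one_smul]
  have h3 : (fun n : ℕ => (n : 𝕜) • (exp ((n : 𝕜)⁻¹ • S) - 1 - (n : 𝕜)⁻¹ • S)) =o[atTop]
      (fun _ : ℕ => S) := h2.congr' (EventuallyEq.refl _ _) heq
  have h4 : (fun n : ℕ => (n : 𝕜) • (exp ((n : 𝕜)⁻¹ • S) - 1 - (n : 𝕜)⁻¹ • S)) =o[atTop]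
      (fun _ : ℕ => (1:ℝ)) := h3.trans_isBigO (isBigO_const_const S one_ne_zero atTop)
  have h5 : Tendsto (fun n : ℕ => (n : 𝕜) • (exp ((n : 𝕜)⁻¹ • S) - 1 - (n : 𝕜)⁻¹ • S))
      atTop (nhds 0) := (isLittleO_one_iff ℝ).mp h4
  have h6 : (fun n : ℕ => (n : 𝕜) • (exp ((n : 𝕜)⁻¹ • S) - 1 - (n : 𝕜)⁻¹ • S)) =ᶠ[atTop]
      (fun n : ℕ => (n : 𝕜) • (exp ((n : 𝕜)⁻¹ • S) - 1) - S) := by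
    filter_upwards [heq] with n hn
    rw [smul_sub, hn]
  rw [← tendsto_sub_nhds_zero_iff]
  exact h5.congr' h6

/-- If `n • (uₙ - 1) → S` then `uₙ ^ n → exp S`. -/
lemma auxLT_pow_lim {u : ℕ → 𝔄} {S : 𝔄}
    (hu : Tendsto (fun n : ℕ => (n : 𝕜) • (u n - 1)) atTop (nhds S)) :
    Tendsto (fun n : ℕ => (u n) ^ n) atTop (nhds (exp S)) := by
  set v : ℕ → 𝔄 := fun n => exp ((n : 𝕜)⁻¹ • S) with hvdef
  have hv : Tendsto (fun n : ℕ => (n : 𝕜) • (v n - 1)) atTop (nhds S) := auxLT_exp_base S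
  have hvn : ∀ᶠ n : ℕ in atTop, v n ^ n = exp S := by
    filter_upwards [eventually_ge_atTop 1] with n hn
    have hn0 : ((n : 𝕜)) ≠ 0 := Nat.cast_ne_zero.mpr (by omega)
    rw [hvdef]
    let +nondep : NormedAlgebra ℚ 𝔄 := .restrictScalars ℚ 𝕜 𝔄
    rw [← exp_nsmul, ← Nat.cast_smul_eq_nsmul 𝕜, smul_smul, mul_inv_cancel₀ hn0, one_smul]
  have hdiff : Tendsto (fun n : ℕ => (n : 𝕜) • (u n - v n)) atTop (nhds 0) := by
    have h := hu.sub hv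
    rw [sub_self] at h
    refine h.congr (fun n => ?_)
    rw [← smul_sub]
    congr 1
    abel
  set K : ℝ := ‖S‖ + 1 with hKdef
  have hK0 : (0:ℝ) ≤ K := by positivity
  have hbound : ∀ᶠ n : ℕ in atTop, ‖u n - 1‖ ≤ K / n ∧ ‖v n - 1‖ ≤ K / n := by
    have h1 : ∀ᶠ n : ℕ in atTop, ‖(n : 𝕜) • (u n - 1)‖ ≤ K :=
      hu.norm.eventually_le_const (show ‖S‖ < K by simp [hKdef])
    have h2 : ∀ᶠ n : ℕ in atTop, ‖(n : 𝕜) • (v n - 1)‖ ≤ K :=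
      hv.norm.eventually_le_const (show ‖S‖ < K by simp [hKdef])
    filter_upwards [h1, h2, eventually_ge_atTop 1] with n hn1 hn2 hn
    have hnpos : (0:ℝ) < n := by exact_mod_cast Nat.pos_of_ne_zero (by omega)
    constructor
    · rw [le_div_iff₀ hnpos, mul_comm]
      calc (n:ℝ) * ‖u n - 1‖ = ‖(n : 𝕜) • (u n - 1)‖ := by
            rw [norm_smul, RCLike.norm_natCast]
        _ ≤ K := hn1
    · rw [le_div_iff₀ hnpos, mul_comm]
      calc (n:ℝ) * ‖v n - 1‖ = ‖(n : 𝕜) • (v n - 1)‖ := by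
            rw [norm_smul, RCLike.norm_natCast]
        _ ≤ K := hn2
  have hmain : ∀ᶠ n : ℕ in atTop,
      ‖u n ^ n - exp S‖ ≤ Real.exp K * ‖(n : 𝕜) • (u n - v n)‖ := by
    filter_upwards [hbound, hvn, eventually_ge_atTop 1] with n hb hvne hn
    have hnpos : (0:ℝ) < n := by exact_mod_cast Nat.pos_of_ne_zero (by omega)
    set C : ℝ := 1 + K / n with hCdef
    have hKn0 : (0:ℝ) ≤ K / n := div_nonneg hK0 (le_of_lt hnpos)
    have hC1 : (1:ℝ) ≤ C := by rw [hCdef]; linarith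
    have hCu : 1 + ‖u n - 1‖ ≤ C := by rw [hCdef]; linarith [hb.1]
    have hCv : 1 + ‖v n - 1‖ ≤ C := by rw [hCdef]; linarith [hb.2]
    have htel := auxLT_pow_sub_pow_le (u n) (v n) hC1 hCu hCv n
    have hCpow : C ^ n ≤ Real.exp K := by
      have hstep : C ≤ Real.exp (K / n) := by
        rw [hCdef, add_comm]
        exact Real.add_one_le_exp (K / n)
      calc C ^ n ≤ Real.exp (K / n) ^ n :=
            pow_le_pow_left₀ (by linarith) hstep n
        _ = Real.exp ((n:ℝ) * (K / n)) := (Real.exp_nat_mul _ n).symm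
        _ = Real.exp K := by rw [mul_div_cancel₀ K (ne_of_gt hnpos)]
    have hns : ‖(n : 𝕜) • (u n - v n)‖ = (n:ℝ) * ‖u n - v n‖ := by
      rw [norm_smul, RCLike.norm_natCast]
    calc ‖u n ^ n - exp S‖ = ‖u n ^ n - v n ^ n‖ := by rw [hvne]
      _ ≤ n * C ^ n * ‖u n - v n‖ := htel
      _ ≤ n * Real.exp K * ‖u n - v n‖ := by
          apply mul_le_mul_of_nonneg_right _ (norm_nonneg _)
          exact mul_le_mul_of_nonneg_left hCpow (le_of_lt hnpos)
      _ = Real.exp K * ‖(n : 𝕜) • (u n - v n)‖ := by rw [hns]; ring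
  rw [tendsto_iff_norm_sub_tendsto_zero]
  apply squeeze_zero' (Eventually.of_forall fun n => norm_nonneg _) hmain
  have h := hdiff.norm.const_mul (Real.exp K)
  simpa using h

/-- The Jordan product minus one, in terms of `a - 1` and `b - 1`. -/
lemma auxLT_jordan_sub_one (a b : 𝔄) :
    jordanMul 𝕜 a b - 1
      = (a - 1) + (b - 1) + (2:𝕜)⁻¹ • ((a - 1) * (b - 1) + (b - 1) * (a - 1)) := by
  have h2 : (2:𝕜) ≠ 0 := two_ne_zero
  have key : a * b + b * a
      = ((a - 1) * (b - 1) + (b - 1) * (a - 1)) + (2:𝕜) • ((a - 1) + (b - 1) + 1) := by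
    rw [two_smul 𝕜]
    noncomm_ring
  rw [jordanMul, key, smul_add, inv_smul_smul₀ h2]
  abel

/-- Limits of Jordan products of "first order" families. -/
lemma auxLT_jordan_lim {u v : ℕ → 𝔄} {S T : 𝔄}
    (hu : Tendsto (fun n : ℕ => (n : 𝕜) • (u n - 1)) atTop (nhds S))
    (hv : Tendsto (fun n : ℕ => (n : 𝕜) • (v n - 1)) atTop (nhds T)) :
    Tendsto (fun n : ℕ => (n : 𝕜) • (jordanMul 𝕜 (u n) (v n) - 1)) atTop (nhds (S + T)) := by
  have hq0 : Tendsto (fun n : ℕ => v n - 1) atTop (nhds (0 : 𝔄)) := by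
    have h := (auxLT_inv_tendsto (𝕜 := 𝕜)).smul hv
    rw [zero_smul] at h
    apply h.congr'
    filter_upwards [eventually_ge_atTop 1] with n hn
    have hn0 : ((n : 𝕜)) ≠ 0 := Nat.cast_ne_zero.mpr (by omega)
    rw [smul_smul, inv_mul_cancel₀ hn0, one_smul]
  have hfun : ∀ n : ℕ, (n : 𝕜) • (jordanMul 𝕜 (u n) (v n) - 1)
      = (n : 𝕜) • (u n - 1) + (n : 𝕜) • (v n - 1)
        + (2:𝕜)⁻¹ • (((n : 𝕜) • (u n - 1)) * (v n - 1)
            + (v n - 1) * ((n : 𝕜) • (u n - 1))) := by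
    intro n
    rw [auxLT_jordan_sub_one, smul_add, smul_add]
    congr 1
    rw [smul_comm ((n:𝕜)) ((2:𝕜)⁻¹), smul_add, smul_mul_assoc, mul_smul_comm]
  have hlim : Tendsto (fun n : ℕ => (n : 𝕜) • (u n - 1) + (n : 𝕜) • (v n - 1)
        + (2:𝕜)⁻¹ • (((n : 𝕜) • (u n - 1)) * (v n - 1)
            + (v n - 1) * ((n : 𝕜) • (u n - 1))))
      atTop (nhds (S + T + (2:𝕜)⁻¹ • (S * 0 + 0 * S))) :=
    (hu.add hv).add (((hu.mul hq0).add (hq0.mul hu)).const_smul _)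
  have := hlim.congr (fun n => (hfun n).symm)
  simpa using this

lemma auxLT_gProd_succ (A : ℕ → 𝔄) (m n : ℕ) :
    gProd 𝕜 A (m+1) n = jordanMul 𝕜 (gProd 𝕜 A m n) (exp ((n : 𝕜)⁻¹ • A (1+m))) := by
  rw [gProd, gProd, List.range'_concat, List.map_append, List.foldl_append]
  simp

lemma auxLT_gProd_lim (A : ℕ → 𝔄) (m : ℕ) :
    Tendsto (fun n : ℕ => (n : 𝕜) • (gProd 𝕜 A m n - 1)) atTop
      (nhds (∑ j ∈ Finset.Icc 1 m, A j)) := by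
  induction m with
  | zero =>
    simp [gProd]
  | succ m ih =>
    have hbase := auxLT_exp_base (𝕜 := 𝕜) (A (1+m))
    have h := auxLT_jordan_lim ih hbase
    have hsum : (∑ j ∈ Finset.Icc 1 (m+1), A j) = (∑ j ∈ Finset.Icc 1 m, A j) + A (1+m) := by
      rw [Finset.sum_Icc_succ_top (Nat.le_add_left 1 m), add_comm 1 m]
    rw [hsum]
    refine h.congr (fun n => ?_)
    rw [auxLT_gProd_succ]

end Aux

theorem lieTrotter_gProd (𝕜 : Type*) [RCLike 𝕜] {𝔄 : Type*} [NormedRing 𝔄]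
    [NormedAlgebra 𝕜 𝔄] [CompleteSpace 𝔄] (m : ℕ) (hm : 1 ≤ m) (A : ℕ → 𝔄) :
    Filter.Tendsto (fun n : ℕ => (gProd 𝕜 A m n) ^ n) Filter.atTop
      (nhds (exp (∑ j ∈ Finset.Icc 1 m, A j))) := by
  exact auxLT_pow_lim (auxLT_gProd_lim A m)
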